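/- Let t(n,k) be the entries of the Riordan array (C(z(1-z+z^2)), z*C(z(1-z+z^2))), i.e., t(n,k) = [z^n] (z^k * C(z(1-z+z^2))^{k+1}). Then for all n ≥ 2 and k ≥ 1: t(n,k) = t(n,k-1) + t(n-1,k) - t(n-1,k-2) - t(n-2,k), where t(n,j) = 0 for j < 0. -/

import Mathlib

open PowerSeries

/-- Riordan array recurrence for partial peak-less Motzkin paths with air pockets:
with `t(n,k) = [z^n] (z^k * C(z(1-z+z^2))^{k+1})` (and `t(n,j) = 0` for `j < 0`),
for `n ≥ 2` and `k ≥ 1`,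
`t(n,k) = t(n,k-1) + t(n-1,k) - t(n-1,k-2) - t(n-2,k)`. -/
theorem peakless_riordan_recurrence (T : PowerSeries ℚ)
    (hT : (X - X^2 + X^3) * T^2 + 1 = T)
    (t : ℕ → ℤ → ℚ)
    (ht : ∀ n : ℕ, ∀ k : ℤ,
      t n k = if 0 ≤ k then coeff n (X ^ k.toNat * T ^ (k.toNat + 1)) else 0) :
    ∀ n : ℕ, ∀ k : ℤ, 2 ≤ n → 1 ≤ k →
      t n k = t n (k - 1) + t (n - 1) k - t (n - 1) (k - 2) - t (n - 2) k := by
  intro n k hn hk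
  obtain ⟨j, hj⟩ : ∃ j : ℕ, k = (j : ℤ) + 1 := ⟨(k - 1).toNat, by omega⟩
  subst hj
  have htoNat1 : ((j : ℤ) + 1).toNat = j + 1 := by omega
  have htoNat2 : ((j : ℤ) + 1 - 1).toNat = j := by omega
  rw [ht n _, ht n _, ht (n-1) _, ht (n-1) _, ht (n-2) _]
  rw [if_pos (by omega : (0:ℤ) ≤ (j:ℤ)+1), if_pos (by omega : (0:ℤ) ≤ (j:ℤ)+1-1),
    if_pos (by omega : (0:ℤ) ≤ (j:ℤ)+1), if_pos (by omega : (0:ℤ) ≤ (j:ℤ)+1)]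
  rw [htoNat1, htoNat2]
  have e1 : n - 1 + 1 = n := by omega
  have e2 : n - 2 + 2 = n := by omega
  -- key series identity
  have key : X^j * T^(j+1)
      = X^(j+1)*T^(j+1+1) - X^(j+2)*T^(j+1+1) + X^(j+3)*T^(j+1+1) + X^j*T^j := by
    linear_combination (-(X^j * T^j) : PowerSeries ℚ) * hT
  have hkey := congrArg (coeff n) key
  rw [map_add, map_add, map_sub] at hkey
  -- shift lemmas
  have h1 : coeff n (X^(j+2)*T^(j+1+1)) = coeff (n-1) (X^(j+1)*T^(j+1+1)) :=
    calc coeff n (X^(j+2)*T^(j+1+1))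
        = coeff (n-1+1) (X^1 * (X^(j+1)*T^(j+1+1))) := by rw [e1]; ring_nf
      _ = coeff (n-1) (X^(j+1)*T^(j+1+1)) := coeff_X_pow_mul _ 1 (n-1)
  have h2 : coeff n (X^(j+3)*T^(j+1+1)) = coeff (n-2) (X^(j+1)*T^(j+1+1)) :=
    calc coeff n (X^(j+3)*T^(j+1+1))
        = coeff (n-2+2) (X^2 * (X^(j+1)*T^(j+1+1))) := by rw [e2]; ring_nf
      _ = coeff (n-2) (X^(j+1)*T^(j+1+1)) := coeff_X_pow_mul _ 2 (n-2)
  rw [h1, h2] at hkey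
  rcases Nat.eq_zero_or_pos j with hj0 | hj1
  · -- j = 0 : k = 1, the t(n-1, k-2) term vanishes
    subst hj0
    rw [if_neg (show ¬ (0:ℤ) ≤ ((0:ℕ):ℤ) + 1 - 2 by omega)]
    have h3 : coeff n ((X^0*T^0 : PowerSeries ℚ)) = 0 := by
      have hne : n ≠ 0 := by omega
      simp [coeff_one, hne]
    rw [h3] at hkey
    linarith
  · obtain ⟨i, rfl⟩ : ∃ i, j = i + 1 := ⟨j - 1, by omega⟩
    rw [if_pos (show (0:ℤ) ≤ ((i+1:ℕ):ℤ) + 1 - 2 by omega)]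
    rw [show (((i+1:ℕ):ℤ) + 1 - 2).toNat = i by omega]
    have h3 : coeff n (X^(i+1)*T^(i+1)) = coeff (n-1) (X^i*T^(i+1)) :=
      calc coeff n (X^(i+1)*T^(i+1))
          = coeff (n-1+1) (X^1 * (X^i*T^(i+1))) := by rw [e1]; ring_nf
        _ = coeff (n-1) (X^i*T^(i+1)) := coeff_X_pow_mul _ 1 (n-1)
    rw [h3] at hkey
    linarith
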